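/- arXiv:1306.5594 — 3 statements merged into one kernel-verified Lean document; each statement's English description precedes it below -/
import Mathlib

section
/- Let G be a graph and U ⊆ V(G). Every stable set S of G has a unique extension to a stable set of the record graph G(U) that meets every clique in ℒ(U), namely S ∪ {r_{S∩U}}. Consequently the stable set polytope of G equals the projection onto ℝ^{V(G)} of the face of the stable set polytope of G(U) obtained by requiring x(L) = 1 for all L ∈ ℒ(U). -/
open Finset
open scoped Classical

variable {V : Type*} [Fintype V] [DecidableEq V]

/-- A stable (independent) set. -/
def IsStable {W : Type*} (G : SimpleGraph W) (S : Finset W) : Prop :=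
  ∀ a ∈ S, ∀ b ∈ S, ¬ G.Adj a b

/-- The record indices: stable subsets of `U`. -/
def RecT (G : SimpleGraph V) (U : Finset V) : Type _ :=
  {T : Finset V // T ⊆ U ∧ IsStable G T}

noncomputable instance (G : SimpleGraph V) (U : Finset V) : Fintype (RecT G U) := by
  unfold RecT; infer_instance

instance (G : SimpleGraph V) (U : Finset V) : DecidableEq (RecT G U) := by
  unfold RecT; infer_instance

/-- The record graph `G(U)`: `G` plus a clique of record vertices `r_T`, one for each
stable `T ⊆ U`, with `r_T` adjacent exactly to `U \ T` among original vertices. -/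
noncomputable def recordGraph (G : SimpleGraph V) (U : Finset V) :
    SimpleGraph (V ⊕ RecT G U) :=
  SimpleGraph.fromRel (fun x y =>
    match x, y with
    | Sum.inl a, Sum.inl b => G.Adj a b
    | Sum.inl a, Sum.inr T => a ∈ U ∧ a ∉ T.1
    | Sum.inr T, Sum.inl a => a ∈ U ∧ a ∉ T.1
    | Sum.inr _, Sum.inr _ => True)

/-- The collection `ℒ(U)` of cliques of `G(U)`: the record clique together with, for
each `v ∈ U`, the clique `{v} ∪ {r_T : v ∉ T}`. -/
noncomputable def recordCliques (G : SimpleGraph V) (U : Finset V) :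
    Set (Finset (V ⊕ RecT G U)) :=
  {(Finset.univ : Finset (RecT G U)).image Sum.inr} ∪
    {L | ∃ v ∈ U, L = insert (Sum.inl v)
      ((Finset.univ.filter (fun T : RecT G U => v ∉ T.1)).image Sum.inr)}

/-- The stable set polytope. -/
noncomputable def stab {W : Type*} [Fintype W] (G : SimpleGraph W) : Set (W → ℝ) :=
  convexHull ℝ {x | ∃ S : Finset W, IsStable G S ∧
    x = fun w => if w ∈ S then (1 : ℝ) else 0}

/-- The polytope `STAB(G, ℒ)`: convex hull of the stable sets meeting all cliques
of `ℒ`. -/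
noncomputable def stabL {W : Type*} [Fintype W] (G : SimpleGraph W)
    (ℒ : Set (Finset W)) : Set (W → ℝ) :=
  convexHull ℝ {x | ∃ S : Finset W, IsStable G S ∧ (∀ L ∈ ℒ, (S ∩ L).Nonempty) ∧
    x = fun w => if w ∈ S then (1 : ℝ) else 0}

set_option linter.unusedSectionVars false

lemma adj_inl_inl (G : SimpleGraph V) (U : Finset V) {a b : V} :
    (recordGraph G U).Adj (Sum.inl a) (Sum.inl b) ↔ G.Adj a b := by
  simp only [recordGraph, SimpleGraph.fromRel_adj]
  constructor
  · rintro ⟨-, h | h⟩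
    · exact h
    · exact h.symm
  · intro h
    exact ⟨by simp [h.ne], Or.inl h⟩

lemma adj_inl_inr (G : SimpleGraph V) (U : Finset V) {a : V} {T : RecT G U} :
    (recordGraph G U).Adj (Sum.inl a) (Sum.inr T) ↔ a ∈ U ∧ a ∉ T.1 := by
  simp [recordGraph, SimpleGraph.fromRel_adj]

lemma adj_inr_inr (G : SimpleGraph V) (U : Finset V) {T T' : RecT G U} :
    (recordGraph G U).Adj (Sum.inr T) (Sum.inr T') ↔ T ≠ T' := by
  simp [recordGraph, SimpleGraph.fromRel_adj]
noncomputable def extRec (G : SimpleGraph V) (U : Finset V) (S : Finset V)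
    (hS : IsStable G S) : RecT G U :=
  ⟨S ∩ U, inter_subset_right,
    fun a ha b hb => hS a (mem_inter.1 ha).1 b (mem_inter.1 hb).1⟩

noncomputable def extSet (G : SimpleGraph V) (U : Finset V) (S : Finset V)
    (hS : IsStable G S) : Finset (V ⊕ RecT G U) :=
  S.image Sum.inl ∪ {Sum.inr (extRec G U S hS)}

lemma extSet_spec (G : SimpleGraph V) (U : Finset V) (S : Finset V) (hS : IsStable G S) :
    IsStable (recordGraph G U) (extSet G U S hS) ∧
    (∀ L ∈ recordCliques G U, ((extSet G U S hS) ∩ L).Nonempty) ∧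
    (∀ v : V, Sum.inl v ∈ extSet G U S hS ↔ v ∈ S) := by
  have hmem : ∀ x, x ∈ extSet G U S hS ↔
      ((∃ v ∈ S, x = Sum.inl v) ∨ x = Sum.inr (extRec G U S hS)) := by
    intro x
    simp [extSet, eq_comm]
    exact or_comm
  refine ⟨?_, ?_, ?_⟩
  · intro a ha b hb hadj
    rcases (hmem a).1 ha with ⟨v, hv, rfl⟩ | rfl <;>
      rcases (hmem b).1 hb with ⟨w, hw, rfl⟩ | rfl
    · exact hS v hv w hw ((adj_inl_inl G U).1 hadj)
    · have := (adj_inl_inr G U).1 hadj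
      exact this.2 (by simp [extRec, hv, this.1])
    · have := (adj_inl_inr G U).1 hadj.symm
      exact this.2 (by simp [extRec, hw, this.1])
    · exact (adj_inr_inr G U).1 hadj rfl
  · intro L hL
    rcases hL with hL | ⟨v, hv, rfl⟩
    · refine ⟨Sum.inr (extRec G U S hS), mem_inter.2 ⟨(hmem _).2 (Or.inr rfl), ?_⟩⟩
      rw [Set.mem_singleton_iff.1 hL]
      simp
    · by_cases hvS : v ∈ S
      · exact ⟨Sum.inl v, mem_inter.2 ⟨(hmem _).2 (Or.inl ⟨v, hvS, rfl⟩), mem_insert_self _ _⟩⟩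
      · refine ⟨Sum.inr (extRec G U S hS), mem_inter.2 ⟨(hmem _).2 (Or.inr rfl), ?_⟩⟩
        refine mem_insert_of_mem (mem_image.2 ⟨extRec G U S hS, ?_, rfl⟩)
        simp [extRec, hvS]
        exact mem_filter.2 ⟨mem_univ _, fun h => hvS (mem_inter.1 h).1⟩
  · intro v
    rw [hmem]
    simp

lemma char_lemma (G : SimpleGraph V) (U : Finset V) (S : Finset V) (hS : IsStable G S)
    (Shat : Finset (V ⊕ RecT G U))
    (h1 : IsStable (recordGraph G U) Shat)
    (h2 : ∀ L ∈ recordCliques G U, (Shat ∩ L).Nonempty)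
    (h3 : ∀ v : V, Sum.inl v ∈ Shat ↔ v ∈ S) :
    ∃ T : RecT G U, T.1 = S ∩ U ∧ Shat = S.image Sum.inl ∪ {Sum.inr T} := by
  obtain ⟨x, hx⟩ := h2 _ (Or.inl rfl)
  rw [mem_inter] at hx
  obtain ⟨T, -, rfl⟩ := mem_image.1 hx.2
  have hTmem : Sum.inr T ∈ Shat := hx.1
  -- uniqueness of the record vertex
  have huniq : ∀ T' : RecT G U, Sum.inr T' ∈ Shat → T' = T := by
    intro T' hT'
    by_contra hne
    exact h1 _ hT' _ hTmem ((adj_inr_inr G U).2 hne)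
  refine ⟨T, ?_, ?_⟩
  · apply Finset.Subset.antisymm
    · intro v hv
      have hvU : v ∈ U := T.2.1 hv
      refine mem_inter.2 ⟨?_, hvU⟩
      by_contra hvS
      obtain ⟨x, hx⟩ := h2 _ (Or.inr ⟨v, hvU, rfl⟩)
      rw [mem_inter, mem_insert] at hx
      rcases hx.2 with h | h
      · exact hvS ((h3 v).1 (h ▸ hx.1))
      · obtain ⟨T'', hT'', hTx⟩ := mem_image.1 h
        rw [← hTx] at hx
        have := huniq T'' hx.1
        rw [this] at hT''
        exact (mem_filter.1 hT'').2 hv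
    · intro v hv
      rw [mem_inter] at hv
      have hvin : Sum.inl v ∈ Shat := (h3 v).2 hv.1
      by_contra hvT
      exact h1 _ hvin _ hTmem ((adj_inl_inr G U).2 ⟨hv.2, hvT⟩)
  · ext x
    simp only [mem_union, mem_image, mem_singleton]
    constructor
    · intro hx
      match x with
      | Sum.inl v => exact Or.inl ⟨v, (h3 v).1 hx, rfl⟩
      | Sum.inr T' => exact Or.inr (by rw [huniq T' hx])
    · rintro (⟨v, hv, rfl⟩ | rfl)
      · exact (h3 v).2 hv
      · exact hTmem

/-- every stable set `S` of `G` has a unique extension to a stable set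
of `G(U)` meeting every clique of `ℒ(U)`, namely `S ∪ {r_{S ∩ U}}`; consequently
`STAB(G)` is the projection onto the original coordinates of
`STAB(G(U), ℒ(U))`. -/
theorem stmt10 (G : SimpleGraph V) (U : Finset V) :
    (∀ S : Finset V, IsStable G S →
      ((∃! Shat : Finset (V ⊕ RecT G U),
          IsStable (recordGraph G U) Shat ∧
          (∀ L ∈ recordCliques G U, (Shat ∩ L).Nonempty) ∧
          (∀ v : V, Sum.inl v ∈ Shat ↔ v ∈ S)) ∧
        (∀ Shat : Finset (V ⊕ RecT G U),
          IsStable (recordGraph G U) Shat →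
          (∀ L ∈ recordCliques G U, (Shat ∩ L).Nonempty) →
          (∀ v : V, Sum.inl v ∈ Shat ↔ v ∈ S) →
          ∃ T : RecT G U, T.1 = S ∩ U ∧ Shat = S.image Sum.inl ∪ {Sum.inr T}))) ∧
    stab G = {x : V → ℝ | ∃ y ∈ stabL (recordGraph G U) (recordCliques G U),
      ∀ v : V, x v = y (Sum.inl v)} := by
  constructor
  · intro S hS
    refine ⟨⟨extSet G U S hS, extSet_spec G U S hS, ?_⟩, fun Shat a b c => char_lemma G U S hS Shat a b c⟩
    intro Shat ⟨a, b, c⟩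
    obtain ⟨T, hT1, hT2⟩ := char_lemma G U S hS Shat a b c
    have : T = extRec G U S hS := Subtype.ext hT1
    rw [hT2, this]
    rfl
  · -- polytope equality
    set f : ((V ⊕ RecT G U) → ℝ) →ₗ[ℝ] (V → ℝ) := LinearMap.funLeft ℝ ℝ Sum.inl with hf
    have himg : {x : V → ℝ | ∃ y ∈ stabL (recordGraph G U) (recordCliques G U),
        ∀ v : V, x v = y (Sum.inl v)} = f '' (stabL (recordGraph G U) (recordCliques G U)) := by
      ext x
      constructor
      · rintro ⟨y, hy, hxy⟩
        exact ⟨y, hy, by ext v; exact (hxy v).symm⟩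
      · rintro ⟨y, hy, rfl⟩
        exact ⟨y, hy, fun v => rfl⟩
    rw [himg, stabL, LinearMap.image_convexHull, stab]
    congr 1
    ext x
    constructor
    · rintro ⟨S, hS, rfl⟩
      refine ⟨_, ⟨extSet G U S hS, (extSet_spec G U S hS).1, by convert (extSet_spec G U S hS).2.1, rfl⟩, ?_⟩
      ext v
      simp only [hf, LinearMap.funLeft_apply, Function.comp]
      by_cases h : v ∈ S
      · rw [if_pos h, if_pos (((extSet_spec G U S hS).2.2 v).2 h)]
      · rw [if_neg h, if_neg (fun hc => h (((extSet_spec G U S hS).2.2 v).1 hc))]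
    · rintro ⟨y, ⟨Shat, hstab, -, rfl⟩, rfl⟩
      refine ⟨Finset.univ.filter (fun v => Sum.inl v ∈ Shat), ?_, ?_⟩
      · intro a ha b hb hab
        exact hstab _ (mem_filter.1 ha).2 _ (mem_filter.1 hb).2 ((adj_inl_inl G U).2 hab)
      · ext v
        simp [hf, LinearMap.funLeft_apply]
end

section
/- Let G⁺ be the clique lift of U ⊆ V from a graph G = (V,E): delete U, add a clique with one vertex s_S for each stable set S of G[U], and join s_S to every vertex of N_G(S)\U. Define p : ℝ^{(V\U)∪Ũ} → ℝ^V by p_v(x) = Σ_{S ∋ v} x_{s_S} for v ∈ U and p_v(x) = x_v otherwise. Then STAB(G) = p(STAB(G⁺)). -/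
open Finset
open scoped Classical

variable {V : Type*} [Fintype V] [DecidableEq V]

/-- The stable subsets of `U` (indices of the lifted clique, including `∅`). -/
def StabU (G : SimpleGraph V) (U : Finset V) : Type _ :=
  {S : Finset V // S ⊆ U ∧ IsStable G S}

noncomputable instance (G : SimpleGraph V) (U : Finset V) : Fintype (StabU G U) := by
  unfold StabU; infer_instance

/-- The clique lift `G⁺` of `U` from `G`: delete `U`, add a clique with one vertex
`s_S` per stable `S ⊆ U`, and join `s_S` to every vertex of `N_G(S) \ U`. -/
noncomputable def cliqueLift (G : SimpleGraph V) (U : Finset V) :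
    SimpleGraph ({v // v ∉ U} ⊕ StabU G U) :=
  SimpleGraph.fromRel (fun x y =>
    match x, y with
    | Sum.inl a, Sum.inl b => G.Adj a.1 b.1
    | Sum.inl a, Sum.inr S => ∃ s ∈ S.1, G.Adj a.1 s
    | Sum.inr S, Sum.inl a => ∃ s ∈ S.1, G.Adj a.1 s
    | Sum.inr _, Sum.inr _ => True)

/-- The projection `p` of the clique lift coordinates back to `ℝ^V`. -/
noncomputable def liftProj (G : SimpleGraph V) (U : Finset V)
    (x : ({v // v ∉ U} ⊕ StabU G U) → ℝ) : V → ℝ :=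
  fun v =>
    if h : v ∈ U then
      ∑ S ∈ (Finset.univ : Finset (StabU G U)).filter (fun S => v ∈ S.1),
        x (Sum.inr S)
    else x (Sum.inl ⟨v, h⟩)

/-- `liftProj` as a linear map. -/
noncomputable def liftProjLM (G : SimpleGraph V) (U : Finset V) :
    (({v // v ∉ U} ⊕ StabU G U) → ℝ) →ₗ[ℝ] (V → ℝ) where
  toFun := liftProj G U
  map_add' x y := by
    funext v
    simp only [liftProj, Pi.add_apply]
    split_ifs with h
    · rw [Finset.sum_add_distrib]
    · rfl
  map_smul' c x := by
    funext v
    simp only [liftProj, Pi.smul_apply, RingHom.id_apply, smul_eq_mul]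
    split_ifs with h
    · rw [Finset.mul_sum]
    · rfl

lemma cliqueLift_adj (G : SimpleGraph V) (U : Finset V)
    (x y : {v // v ∉ U} ⊕ StabU G U) :
    (cliqueLift G U).Adj x y ↔ x ≠ y ∧
      ((match x, y with
        | Sum.inl a, Sum.inl b => G.Adj a.1 b.1
        | Sum.inl a, Sum.inr S => ∃ s ∈ S.1, G.Adj a.1 s
        | Sum.inr S, Sum.inl a => ∃ s ∈ S.1, G.Adj a.1 s
        | Sum.inr _, Sum.inr _ => True) ∨
       (match y, x with
        | Sum.inl a, Sum.inl b => G.Adj a.1 b.1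
        | Sum.inl a, Sum.inr S => ∃ s ∈ S.1, G.Adj a.1 s
        | Sum.inr S, Sum.inl a => ∃ s ∈ S.1, G.Adj a.1 s
        | Sum.inr _, Sum.inr _ => True)) := by
  simp [cliqueLift, SimpleGraph.fromRel_adj]

/-- Classical indicator function of a finset. -/
noncomputable def cind {W : Type*} (S : Finset W) : W → ℝ :=
  fun w => @ite ℝ (w ∈ S)
    (@Finset.decidableMem W (fun a b => Classical.propDecidable (a = b)) w S) 1 0

lemma cind_pos {W : Type*} {S : Finset W} {w : W} (h : w ∈ S) : cind S w = 1 := by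
  simp [cind, h]

lemma cind_neg {W : Type*} {S : Finset W} {w : W} (h : w ∉ S) : cind S w = 0 := by
  simp [cind, h]

lemma stab_eq {W : Type*} [Fintype W] (G : SimpleGraph W) :
    stab G = convexHull ℝ {x | ∃ S : Finset W, IsStable G S ∧ x = cind S} := rfl

lemma vertex_sets_eq (G : SimpleGraph V) (U : Finset V) :
    {x : V → ℝ | ∃ S : Finset V, IsStable G S ∧ x = cind S}
    = liftProj G U ''
      {x | ∃ S : Finset ({v // v ∉ U} ⊕ StabU G U),
        IsStable (cliqueLift G U) S ∧ x = cind S} := by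
  ext x
  constructor
  · rintro ⟨T, hT, rfl⟩
    have hS0 : T ∩ U ⊆ U ∧ IsStable G (T ∩ U) := by
      refine ⟨Finset.inter_subset_right, fun a ha b hb => ?_⟩
      exact hT a (Finset.mem_of_mem_inter_left ha) b (Finset.mem_of_mem_inter_left hb)
    set S0 : StabU G U := ⟨T ∩ U, hS0⟩ with hS0def
    set Tp : Finset ({v // v ∉ U} ⊕ StabU G U) :=
      Finset.univ.filter (Sum.elim (fun a => a.1 ∈ T) (fun S' => S' = S0)) with hTp
    have memTp : ∀ z, z ∈ Tp ↔ Sum.elim (fun a : {v // v ∉ U} => a.1 ∈ T)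
        (fun S' => S' = S0) z := by
      intro z; simp [hTp]
    refine ⟨cind Tp, ⟨Tp, ?_, rfl⟩, ?_⟩
    · -- stability of Tp
      intro a ha b hb hadj
      rw [cliqueLift_adj] at hadj
      obtain ⟨hne, hrel⟩ := hadj
      rw [memTp] at ha hb
      match a, b with
      | Sum.inl a, Sum.inl b =>
        simp only [Sum.elim_inl] at ha hb
        rcases hrel with h | h
        · exact hT a.1 ha b.1 hb h
        · exact hT b.1 hb a.1 ha h
      | Sum.inl a, Sum.inr S' =>
        simp only [Sum.elim_inl, Sum.elim_inr] at ha hb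
        subst hb
        rcases hrel with ⟨s, hs, hadj⟩ | ⟨s, hs, hadj⟩ <;>
          exact hT a.1 ha s (Finset.mem_of_mem_inter_left hs) hadj
      | Sum.inr S', Sum.inl a =>
        simp only [Sum.elim_inl, Sum.elim_inr] at ha hb
        subst ha
        rcases hrel with ⟨s, hs, hadj⟩ | ⟨s, hs, hadj⟩ <;>
          exact hT a.1 hb s (Finset.mem_of_mem_inter_left hs) hadj
      | Sum.inr S1, Sum.inr S2 =>
        simp only [Sum.elim_inr] at ha hb
        exact hne (by rw [ha, hb])
    · -- projection equals indicator of T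
      funext v
      simp only [liftProj]
      by_cases h : v ∈ U
      · rw [dif_pos h]
        have key : ∀ S' : StabU G U,
            cind Tp (Sum.inr S') = if S' = S0 then (1 : ℝ) else 0 := by
          intro S'
          by_cases hm : S' = S0
          · rw [if_pos hm, cind_pos ((memTp _).2 (by simp [hm]))]
          · rw [if_neg hm, cind_neg (fun hc => hm (by simpa using (memTp _).1 hc))]
        rw [Finset.sum_congr rfl (fun S' _ => key S'),
          Finset.sum_ite_eq' _ S0 (fun _ => (1 : ℝ))]
        have hmemf : (S0 ∈ Finset.univ.filter (fun S' : StabU G U => v ∈ S'.1)) ↔ v ∈ T := by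
          rw [Finset.mem_filter]
          exact ⟨fun h' => Finset.mem_of_mem_inter_left h'.2,
            fun h' => ⟨Finset.mem_univ _, Finset.mem_inter.2 ⟨h', h⟩⟩⟩
        by_cases hv : v ∈ T
        · rw [if_pos (hmemf.2 hv), cind_pos hv]
        · rw [if_neg (fun hc => hv (hmemf.1 hc)), cind_neg hv]
      · rw [dif_neg h]
        by_cases hv : v ∈ T
        · rw [cind_pos hv, cind_pos ((memTp _).2 (by simpa using hv))]
        · rw [cind_neg hv, cind_neg (fun hc => hv (by simpa using (memTp _).1 hc))]
  · rintro ⟨_, ⟨Tp, hTp, rfl⟩, rfl⟩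
    -- uniqueness of inr member
    have huniq : ∀ S1 S2 : StabU G U, Sum.inr S1 ∈ Tp → Sum.inr S2 ∈ Tp → S1 = S2 := by
      intro S1 S2 h1 h2
      by_contra hne
      exact hTp _ h1 _ h2 ((cliqueLift_adj G U _ _).2
        ⟨fun h => hne (Sum.inr.inj h), Or.inl trivial⟩)
    set T : Finset V := Tp.biUnion (Sum.elim (fun a => {a.1}) (fun S' => S'.1)) with hTdef
    have memT : ∀ v : V, v ∈ T ↔ ∃ z ∈ Tp,
        Sum.elim (fun a : {v // v ∉ U} => v = a.1) (fun S' : StabU G U => v ∈ S'.1) z := by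
      intro v
      simp only [hTdef, Finset.mem_biUnion]
      constructor
      · rintro ⟨z, hz, hv⟩
        refine ⟨z, hz, ?_⟩
        match z with
        | Sum.inl a => simpa using hv
        | Sum.inr S' => simpa using hv
      · rintro ⟨z, hz, hv⟩
        refine ⟨z, hz, ?_⟩
        match z with
        | Sum.inl a => simpa using hv
        | Sum.inr S' => simpa using hv
    refine ⟨T, ?_, ?_⟩
    · -- stability of T
      intro a ha b hb hadj
      rw [memT] at ha hb
      obtain ⟨za, hza, hva⟩ := ha
      obtain ⟨zb, hzb, hvb⟩ := hb
      match za, zb with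
      | Sum.inl a', Sum.inl b' =>
        simp only [Sum.elim_inl] at hva hvb
        subst hva; subst hvb
        refine hTp _ hza _ hzb ((cliqueLift_adj G U _ _).2 ⟨?_, Or.inl hadj⟩)
        intro h
        exact hadj.ne (congrArg (fun z => Sum.elim (fun a : {v // v ∉ U} => a.1)
          (fun _ => a'.1) z) h)
      | Sum.inl a', Sum.inr S2 =>
        simp only [Sum.elim_inl, Sum.elim_inr] at hva hvb
        subst hva
        exact hTp _ hza _ hzb ((cliqueLift_adj G U _ _).2
          ⟨Sum.inl_ne_inr, Or.inl ⟨b, hvb, hadj⟩⟩)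
      | Sum.inr S1, Sum.inl b' =>
        simp only [Sum.elim_inl, Sum.elim_inr] at hva hvb
        subst hvb
        exact hTp _ hzb _ hza ((cliqueLift_adj G U _ _).2
          ⟨Sum.inl_ne_inr, Or.inl ⟨a, hva, hadj.symm⟩⟩)
      | Sum.inr S1, Sum.inr S2 =>
        simp only [Sum.elim_inr] at hva hvb
        have := huniq S1 S2 hza hzb
        subst this
        exact S1.2.2 a hva b hvb hadj
    · -- projection computation
      funext v
      simp only [liftProj]
      by_cases h : v ∈ U
      · rw [dif_pos h]
        by_cases hv : v ∈ T
        · rw [cind_pos hv]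
          rw [memT] at hv
          obtain ⟨z, hz, hvz⟩ := hv
          match z with
          | Sum.inl a => exact absurd (by simpa using hvz ▸ h) a.2
          | Sum.inr S0 =>
            simp only [Sum.elim_inr] at hvz
            have key : ∀ S' : StabU G U, S' ∈ Finset.univ.filter (fun S' => v ∈ S'.1) →
                cind Tp (Sum.inr S') = if S' = S0 then (1 : ℝ) else 0 := by
              intro S' _
              by_cases hmem : Sum.inr S' ∈ Tp
              · rw [cind_pos hmem, if_pos (huniq S' S0 hmem hz)]
              · rw [cind_neg hmem, if_neg]
                rintro rfl; exact hmem hz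
            rw [Finset.sum_congr rfl key,
              Finset.sum_ite_eq' _ S0 (fun _ => (1 : ℝ)), if_pos]
            simp [hvz]
        · rw [cind_neg hv]
          apply Finset.sum_eq_zero
          intro S' hS'
          simp only [Finset.mem_filter, Finset.mem_univ, true_and] at hS'
          apply cind_neg
          intro hmem
          exact hv ((memT v).2 ⟨Sum.inr S', hmem, by simpa using hS'⟩)
      · rw [dif_neg h]
        by_cases hmem : Sum.inl ⟨v, h⟩ ∈ Tp
        · rw [cind_pos hmem, cind_pos]
          exact (memT v).2 ⟨Sum.inl ⟨v, h⟩, hmem, by simp⟩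
        · rw [cind_neg hmem, cind_neg]
          intro hv
          rw [memT] at hv
          obtain ⟨z, hz, hvz⟩ := hv
          match z with
          | Sum.inl a =>
            simp only [Sum.elim_inl] at hvz
            have : a = ⟨v, h⟩ := Subtype.ext hvz.symm
            exact hmem (this ▸ hz)
          | Sum.inr S' =>
            simp only [Sum.elim_inr] at hvz
            exact h (S'.2.1 hvz)

/-- `STAB(G)` is the image of `STAB(G⁺)` under the projection `p`. -/
theorem stmt16 (G : SimpleGraph V) (U : Finset V) :
    stab G = liftProj G U '' stab (cliqueLift G U) := by
  have : liftProj G U = ⇑(liftProjLM G U) := rfl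
  rw [stab_eq, stab_eq, this, LinearMap.image_convexHull, ← this]
  exact congrArg _ (vertex_sets_eq G U)
end

section
/- Let (K, 𝒲) be a generalized amalgam separation of a graph G with K a clique, and let H be the graph on V(G) ∪ ⋃_{W∈𝒲} P_W whose edge set is the union of the edges of the connecting graph G*(K,𝒲) and of all graphs G(K,W), W ∈ 𝒲. Then the map S ↦ S ∩ V(G) is a surjection from the set of stable sets of H meeting every clique in ℒ(K,𝒲) = { K ∪ P_W : W ∈ 𝒲 } onto the set of stable sets of G; consequently STAB(G) = { x_G : x ∈ STAB(H, ℒ(K,𝒲)) }. -/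
open Finset
open scoped Classical

variable {V : Type*} [Fintype V] [DecidableEq V]

/-- The boundary `∂(W)`: vertices of `W` with a neighbor outside `W ∪ K`. -/
noncomputable def bdry (G : SimpleGraph V) (K W : Finset V) : Finset V :=
  W.filter (fun w => ∃ z, z ∉ W ∧ z ∉ K ∧ G.Adj w z)

/-- The equivalence class of `w` in `∂(W)` under "same neighbors outside `W`". -/
noncomputable def cls (G : SimpleGraph V) (K W : Finset V) (w : V) : Finset V :=
  (bdry G K W).filter (fun w' => ∀ z, z ∉ W → (G.Adj w z ↔ G.Adj w' z))

/-- `𝒜_W`: the equivalence classes of the boundary of `W`. -/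
noncomputable def classes (G : SimpleGraph V) (K W : Finset V) : Finset (Finset V) :=
  (bdry G K W).image (cls G K W)

/-- The record vertices: pairs `(W, 𝒳)` with `W ∈ 𝒲` and `𝒳 ⊆ 𝒜_W`. -/
def GARec (G : SimpleGraph V) (K : Finset V) (𝒲 : Finset (Finset V)) : Type _ :=
  {p : Finset V × Finset (Finset V) // p.1 ∈ 𝒲 ∧ p.2 ⊆ classes G K p.1}

noncomputable instance (G : SimpleGraph V) (K : Finset V) (𝒲 : Finset (Finset V)) :
    Fintype (GARec G K 𝒲) := by unfold GARec; infer_instance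

/-- The graph `H`: union of the edges of the connecting graph `G*(K,𝒲)` and of all
graphs `G(K,W)`, `W ∈ 𝒲`, on the vertex set `V ∪ ⋃_W P_W`. -/
noncomputable def gaGraph (G : SimpleGraph V) (K : Finset V) (𝒲 : Finset (Finset V)) :
    SimpleGraph (V ⊕ GARec G K 𝒲) :=
  SimpleGraph.fromRel (fun x y =>
    match x, y with
    | Sum.inl a, Sum.inl b =>
        G.Adj a b ∧ (a ∈ K ∨ b ∈ K ∨ ∃ W ∈ 𝒲, a ∈ W ∧ b ∈ W)
    | Sum.inl a, Sum.inr p =>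
        a ∈ K ∨ (a ∈ bdry G K p.1.1 ∧ ∀ X ∈ p.1.2, a ∉ X)
    | Sum.inr p, Sum.inl a =>
        a ∈ K ∨ (a ∈ bdry G K p.1.1 ∧ ∀ X ∈ p.1.2, a ∉ X)
    | Sum.inr p, Sum.inr p' =>
        p.1.1 = p'.1.1 ∨
          ∃ x y, (∃ X ∈ p.1.2, x ∈ X) ∧ (∃ Y ∈ p'.1.2, y ∈ Y) ∧ G.Adj x y)

/-- The collection `ℒ(K,𝒲)` of cliques `K ∪ P_W`, `W ∈ 𝒲`. -/
noncomputable def gaCliques (G : SimpleGraph V) (K : Finset V) (𝒲 : Finset (Finset V)) :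
    Set (Finset (V ⊕ GARec G K 𝒲)) :=
  {L | ∃ W ∈ 𝒲, L = K.image Sum.inl ∪
    ((Finset.univ : Finset (GARec G K 𝒲)).filter (fun p => p.1.1 = W)).image Sum.inr}

/-! ### Auxiliary lemmas -/

lemma bdry_subset' (G : SimpleGraph V) (K W : Finset V) : bdry G K W ⊆ W :=
  Finset.filter_subset _ _

lemma mem_cls_self {G : SimpleGraph V} {K W : Finset V} {w : V} (hw : w ∈ bdry G K W) :
    w ∈ cls G K W w := by
  rw [cls, Finset.mem_filter]
  exact ⟨hw, fun z _ => Iff.rfl⟩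

lemma cls_mem_classes {G : SimpleGraph V} {K W : Finset V} {w : V} (hw : w ∈ bdry G K W) :
    cls G K W w ∈ classes G K W :=
  Finset.mem_image_of_mem _ hw

lemma class_transfer {G : SimpleGraph V} {K W : Finset V} {X : Finset V}
    (hX : X ∈ classes G K W) {x s : V} (hx : x ∈ X) (hs : s ∈ X) :
    s ∈ bdry G K W ∧ ∀ z, z ∉ W → (G.Adj x z ↔ G.Adj s z) := by
  obtain ⟨w, hw, rfl⟩ := Finset.mem_image.mp hX
  rw [cls, Finset.mem_filter] at hx hs
  exact ⟨hs.1, fun z hz => (hx.2 z hz).symm.trans (hs.2 z hz)⟩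

lemma gaAdj_inl_inl (G : SimpleGraph V) (K : Finset V) (𝒲 : Finset (Finset V)) (a b : V) :
    (gaGraph G K 𝒲).Adj (Sum.inl a) (Sum.inl b) ↔
      a ≠ b ∧ ((G.Adj a b ∧ (a ∈ K ∨ b ∈ K ∨ ∃ W ∈ 𝒲, a ∈ W ∧ b ∈ W)) ∨
        (G.Adj b a ∧ (b ∈ K ∨ a ∈ K ∨ ∃ W ∈ 𝒲, b ∈ W ∧ a ∈ W))) := by
  rw [gaGraph, SimpleGraph.fromRel_adj]
  constructor
  · rintro ⟨h1, h2⟩; exact ⟨fun h => h1 (by rw [h]), h2⟩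
  · rintro ⟨h1, h2⟩; exact ⟨fun h => h1 (Sum.inl.inj h), h2⟩

lemma gaAdj_inl_inr (G : SimpleGraph V) (K : Finset V) (𝒲 : Finset (Finset V)) (a : V)
    (p : GARec G K 𝒲) :
    (gaGraph G K 𝒲).Adj (Sum.inl a) (Sum.inr p) ↔
      a ∈ K ∨ (a ∈ bdry G K p.1.1 ∧ ∀ X ∈ p.1.2, a ∉ X) := by
  rw [gaGraph, SimpleGraph.fromRel_adj]
  constructor
  · rintro ⟨_, h | h⟩ <;> exact h
  · intro h; exact ⟨Sum.inl_ne_inr, Or.inl h⟩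

lemma gaAdj_inr_inr (G : SimpleGraph V) (K : Finset V) (𝒲 : Finset (Finset V))
    (p q : GARec G K 𝒲) :
    (gaGraph G K 𝒲).Adj (Sum.inr p) (Sum.inr q) ↔
      p ≠ q ∧
        ((p.1.1 = q.1.1 ∨
            ∃ x y, (∃ X ∈ p.1.2, x ∈ X) ∧ (∃ Y ∈ q.1.2, y ∈ Y) ∧ G.Adj x y) ∨
          (q.1.1 = p.1.1 ∨
            ∃ x y, (∃ X ∈ q.1.2, x ∈ X) ∧ (∃ Y ∈ p.1.2, y ∈ Y) ∧ G.Adj x y)) := by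
  rw [gaGraph, SimpleGraph.fromRel_adj]
  constructor
  · rintro ⟨h1, h2⟩; exact ⟨fun h => h1 (by rw [h]), h2⟩
  · rintro ⟨h1, h2⟩; exact ⟨fun h => h1 (Sum.inr.inj h), h2⟩

/-- for a generalized amalgam separation `(K, 𝒲)` with `K` a clique,
`S ↦ S ∩ V(G)` maps the stable sets of `H` meeting every clique of `ℒ(K,𝒲)` onto
the stable sets of `G`; consequently `STAB(G)` is the projection of
`STAB(H, ℒ(K,𝒲))` onto the original coordinates. -/
theorem stmt17 (G : SimpleGraph V) (K : Finset V) (𝒲 : Finset (Finset V))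
    (hK : ∀ a ∈ K, ∀ b ∈ K, a ≠ b → G.Adj a b)
    (hcover : 𝒲.sup id = Finset.univ \ K)
    (hdisj : ∀ W ∈ 𝒲, ∀ W' ∈ 𝒲, W ≠ W' → Disjoint W W')
    (hne : ∀ W ∈ 𝒲, W.Nonempty)
    (hfull : ∀ W ∈ 𝒲, ∀ w ∈ W, (∃ z, z ∉ W ∧ z ∉ K ∧ G.Adj w z) →
      ∀ k ∈ K, G.Adj w k) :
    (∀ S : Finset (V ⊕ GARec G K 𝒲),
      IsStable (gaGraph G K 𝒲) S → (∀ L ∈ gaCliques G K 𝒲, (S ∩ L).Nonempty) →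
      IsStable G (Finset.univ.filter (fun v : V => Sum.inl v ∈ S))) ∧
    (∀ S' : Finset V, IsStable G S' →
      ∃ S : Finset (V ⊕ GARec G K 𝒲),
        IsStable (gaGraph G K 𝒲) S ∧ (∀ L ∈ gaCliques G K 𝒲, (S ∩ L).Nonempty) ∧
        Finset.univ.filter (fun v : V => Sum.inl v ∈ S) = S') ∧
    stab G = {x : V → ℝ | ∃ y ∈ stabL (gaGraph G K 𝒲) (gaCliques G K 𝒲),
      ∀ v : V, x v = y (Sum.inl v)} := by
  -- Part 1
  have part1 : ∀ S : Finset (V ⊕ GARec G K 𝒲),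
      IsStable (gaGraph G K 𝒲) S → (∀ L ∈ gaCliques G K 𝒲, (S ∩ L).Nonempty) →
      IsStable G (Finset.univ.filter (fun v : V => Sum.inl v ∈ S)) := by
    intro S hS hL a ha b hb hab
    simp only [Finset.mem_filter, Finset.mem_univ, true_and] at ha hb
    have hAdjInl : ∀ x y : V, G.Adj x y →
        (x ∈ K ∨ y ∈ K ∨ ∃ W ∈ 𝒲, x ∈ W ∧ y ∈ W) →
        (gaGraph G K 𝒲).Adj (Sum.inl x) (Sum.inl y) := by
      intro x y hxy hc
      exact (gaAdj_inl_inl G K 𝒲 x y).mpr ⟨hxy.ne, Or.inl ⟨hxy, hc⟩⟩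
    by_cases haK : a ∈ K
    · exact hS _ ha _ hb (hAdjInl a b hab (Or.inl haK))
    by_cases hbK : b ∈ K
    · exact hS _ ha _ hb (hAdjInl a b hab (Or.inr (Or.inl hbK)))
    have hax : a ∈ 𝒲.sup id := by
      rw [hcover, Finset.mem_sdiff]; exact ⟨Finset.mem_univ a, haK⟩
    have hbx : b ∈ 𝒲.sup id := by
      rw [hcover, Finset.mem_sdiff]; exact ⟨Finset.mem_univ b, hbK⟩
    obtain ⟨Wa, hWa, haWa⟩ := Finset.mem_sup.mp hax
    obtain ⟨Wb, hWb, hbWb⟩ := Finset.mem_sup.mp hbx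
    simp only [id] at haWa hbWb
    have hWne : Wa ≠ Wb := by
      rintro rfl
      exact hS _ ha _ hb (hAdjInl a b hab (Or.inr (Or.inr ⟨Wa, hWa, haWa, hbWb⟩)))
    have hd := hdisj Wa hWa Wb hWb hWne
    have hbWa : b ∉ Wa := fun h => Finset.disjoint_left.mp hd h hbWb
    have haWb : a ∉ Wb := fun h => Finset.disjoint_left.mp hd haWa h
    have habd : a ∈ bdry G K Wa := by
      rw [bdry, Finset.mem_filter]; exact ⟨haWa, b, hbWa, hbK, hab⟩
    have hbbd : b ∈ bdry G K Wb := by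
      rw [bdry, Finset.mem_filter]; exact ⟨hbWb, a, haWb, haK, hab.symm⟩
    have key : ∀ W : Finset V, W ∈ 𝒲 → ∀ c : V, c ∈ bdry G K W → Sum.inl c ∈ S →
        ∃ p : GARec G K 𝒲, Sum.inr p ∈ S ∧ p.1.1 = W ∧ ∃ X ∈ p.1.2, c ∈ X := by
      intro W hW c hcb hcS
      obtain ⟨u, hu⟩ := hL _ ⟨W, hW, rfl⟩
      rw [Finset.mem_inter] at hu
      obtain ⟨huS, huL⟩ := hu
      rw [Finset.mem_union] at huL
      rcases huL with h1 | h2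
      · obtain ⟨k, hk, rfl⟩ := Finset.mem_image.mp h1
        have hcW : c ∈ W := bdry_subset' G K W hcb
        have hex : ∃ z, z ∉ W ∧ z ∉ K ∧ G.Adj c z := by
          rw [bdry, Finset.mem_filter] at hcb; exact hcb.2
        have hck : G.Adj c k := hfull W hW c hcW hex k hk
        exact absurd (hAdjInl c k hck (Or.inr (Or.inl hk))) (hS _ hcS _ huS)
      · obtain ⟨p, hp, rfl⟩ := Finset.mem_image.mp h2
        rw [Finset.mem_filter] at hp
        by_cases hcx : ∃ X ∈ p.1.2, c ∈ X
        · exact ⟨p, huS, hp.2, hcx⟩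
        · push_neg at hcx
          have hadj : (gaGraph G K 𝒲).Adj (Sum.inl c) (Sum.inr p) :=
            (gaAdj_inl_inr G K 𝒲 c p).mpr (Or.inr ⟨by rw [hp.2]; exact hcb, hcx⟩)
          exact absurd hadj (hS _ hcS _ huS)
    obtain ⟨p, hpS, hpW, X, hX, haX⟩ := key Wa hWa a habd ha
    obtain ⟨q, hqS, hqW, Y, hY, hbY⟩ := key Wb hWb b hbbd hb
    have hpq : p ≠ q := by
      rintro rfl; exact hWne (hpW.symm.trans hqW)
    have hadj : (gaGraph G K 𝒲).Adj (Sum.inr p) (Sum.inr q) :=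
      (gaAdj_inr_inr G K 𝒲 p q).mpr
        ⟨hpq, Or.inl (Or.inr ⟨a, b, ⟨X, hX, haX⟩, ⟨Y, hY, hbY⟩, hab⟩)⟩
    exact hS _ hpS _ hqS hadj
  -- Part 2
  have part2 : ∀ S' : Finset V, IsStable G S' →
      ∃ S : Finset (V ⊕ GARec G K 𝒲),
        IsStable (gaGraph G K 𝒲) S ∧ (∀ L ∈ gaCliques G K 𝒲, (S ∩ L).Nonempty) ∧
        Finset.univ.filter (fun v : V => Sum.inl v ∈ S) = S' := by
    intro S' hS'
    by_cases hK' : (S' ∩ K).Nonempty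
    · refine ⟨S'.image Sum.inl, ?_, ?_, ?_⟩
      · intro x hx y hy hadj
        obtain ⟨a, haS, rfl⟩ := Finset.mem_image.mp hx
        obtain ⟨b, hbS, rfl⟩ := Finset.mem_image.mp hy
        rcases ((gaAdj_inl_inl G K 𝒲 a b).mp hadj).2 with h | h
        · exact hS' a haS b hbS h.1
        · exact hS' a haS b hbS h.1.symm
      · rintro L ⟨W, hW, rfl⟩
        obtain ⟨k, hk⟩ := hK'
        rw [Finset.mem_inter] at hk
        exact ⟨Sum.inl k, Finset.mem_inter.mpr ⟨Finset.mem_image_of_mem _ hk.1,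
          Finset.mem_union_left _ (Finset.mem_image_of_mem _ hk.2)⟩⟩
      · ext v; simp
    · -- K misses S'; add one record vertex per W
      refine ⟨S'.image Sum.inl ∪
        (Finset.univ.filter (fun p : GARec G K 𝒲 =>
          p.1.2 = (classes G K p.1.1).filter (fun X => (X ∩ S').Nonempty))).image Sum.inr,
        ?_, ?_, ?_⟩
      · -- stability
        have hIL : ∀ a, a ∈ S' → ∀ p : GARec G K 𝒲,
            p.1.2 = (classes G K p.1.1).filter (fun X => (X ∩ S').Nonempty) →
            ¬ (gaGraph G K 𝒲).Adj (Sum.inl a) (Sum.inr p) := by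
          intro a haS p hpF hadj
          rcases (gaAdj_inl_inr G K 𝒲 a p).mp hadj with h | ⟨habd, hall⟩
          · exact hK' ⟨a, Finset.mem_inter.mpr ⟨haS, h⟩⟩
          · refine hall (cls G K p.1.1 a) ?_ (mem_cls_self habd)
            rw [hpF, Finset.mem_filter]
            exact ⟨cls_mem_classes habd,
              ⟨a, Finset.mem_inter.mpr ⟨mem_cls_self habd, haS⟩⟩⟩
        have heqc : ∀ p q : GARec G K 𝒲,
            p.1.2 = (classes G K p.1.1).filter (fun X => (X ∩ S').Nonempty) →
            q.1.2 = (classes G K q.1.1).filter (fun X => (X ∩ S').Nonempty) →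
            p.1.1 = q.1.1 → p = q := by
          intro p q hpF hqF h
          apply Subtype.ext
          apply Prod.ext h
          rw [hpF, hqF, h]
        have hRR : ∀ p q : GARec G K 𝒲,
            p.1.2 = (classes G K p.1.1).filter (fun X => (X ∩ S').Nonempty) →
            q.1.2 = (classes G K q.1.1).filter (fun X => (X ∩ S').Nonempty) →
            p.1.1 ≠ q.1.1 →
            ∀ x y, (∃ X ∈ p.1.2, x ∈ X) → (∃ Y ∈ q.1.2, y ∈ Y) → ¬ G.Adj x y := by
          rintro p q hpF hqF hpq x y ⟨X, hX, hxX⟩ ⟨Y, hY, hyY⟩ hxy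
          rw [hpF, Finset.mem_filter] at hX
          rw [hqF, Finset.mem_filter] at hY
          obtain ⟨s, hs⟩ := hX.2
          rw [Finset.mem_inter] at hs
          obtain ⟨t, ht⟩ := hY.2
          rw [Finset.mem_inter] at ht
          obtain ⟨hsb, hxs⟩ := class_transfer hX.1 hxX hs.1
          obtain ⟨htb, hyt⟩ := class_transfer hY.1 hyY ht.1
          have hd := hdisj _ p.2.1 _ q.2.1 hpq
          have hyW : y ∈ q.1.1 := bdry_subset' G K _ (class_transfer hY.1 hyY hyY).1
          have hsW : s ∈ p.1.1 := bdry_subset' G K _ hsb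
          have hyNp : y ∉ p.1.1 := fun h => Finset.disjoint_left.mp hd h hyW
          have h1 : G.Adj s y := (hxs y hyNp).mp hxy
          have hsNq : s ∉ q.1.1 := fun h => Finset.disjoint_left.mp hd hsW h
          have h2 : G.Adj s t := ((hyt s hsNq).mp h1.symm).symm
          exact hS' s hs.2 t ht.2 h2
        intro x hx y hy hadj
        simp only [Finset.mem_union, Finset.mem_image, Finset.mem_filter,
          Finset.mem_univ, true_and] at hx hy
        rcases hx with ⟨a, haS, rfl⟩ | ⟨p, hpF, rfl⟩ <;>
          rcases hy with ⟨b, hbS, rfl⟩ | ⟨q, hqF, rfl⟩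
        · rcases ((gaAdj_inl_inl G K 𝒲 a b).mp hadj).2 with h | h
          · exact hS' a haS b hbS h.1
          · exact hS' a haS b hbS h.1.symm
        · exact hIL a haS q hqF hadj
        · exact hIL b hbS p hpF hadj.symm
        · obtain ⟨hne2, hr⟩ := (gaAdj_inr_inr G K 𝒲 p q).mp hadj
          have hW12 : p.1.1 ≠ q.1.1 := fun h => hne2 (heqc p q hpF hqF h)
          rcases hr with (h | ⟨x, y, hx1, hy1, hxy⟩) | (h | ⟨x, y, hx1, hy1, hxy⟩)
          · exact hW12 h
          · exact hRR p q hpF hqF hW12 x y hx1 hy1 hxy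
          · exact hW12 h.symm
          · exact hRR q p hqF hpF hW12.symm x y hx1 hy1 hxy
      · -- meets all cliques
        rintro L ⟨W, hW, rfl⟩
        refine ⟨Sum.inr ⟨(W, (classes G K W).filter (fun X => (X ∩ S').Nonempty)),
          hW, Finset.filter_subset _ _⟩, Finset.mem_inter.mpr ⟨?_, ?_⟩⟩
        · apply Finset.mem_union_right
          apply Finset.mem_image_of_mem
          refine Finset.mem_filter.mpr ?_
          exact ⟨Finset.mem_univ _, rfl⟩
        · apply Finset.mem_union_right
          apply Finset.mem_image_of_mem
          refine Finset.mem_filter.mpr ?_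
          exact ⟨Finset.mem_univ _, rfl⟩
      · ext v; simp
  refine ⟨part1, part2, ?_⟩
  -- Part 3
  have himg : {x : V → ℝ | ∃ y ∈ stabL (gaGraph G K 𝒲) (gaCliques G K 𝒲),
      ∀ v : V, x v = y (Sum.inl v)} =
      (LinearMap.funLeft ℝ ℝ (Sum.inl : V → V ⊕ GARec G K 𝒲)) ''
        stabL (gaGraph G K 𝒲) (gaCliques G K 𝒲) := by
    ext x
    constructor
    · rintro ⟨y, hy, hxy⟩
      exact ⟨y, hy, funext fun v => (hxy v).symm⟩
    · rintro ⟨y, hy, rfl⟩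
      exact ⟨y, hy, fun v => rfl⟩
  rw [himg]
  unfold stab stabL
  rw [LinearMap.image_convexHull]
  congr 1
  ext x
  constructor
  · rintro ⟨S', hSt, rfl⟩
    obtain ⟨S, h1, h2, h3⟩ := part2 S' hSt
    refine ⟨_, ⟨S, h1, fun L hL => ?_, rfl⟩, ?_⟩
    · convert h2 L hL using 3
    funext w
    have hiff : Sum.inl w ∈ S ↔ w ∈ S' := by
      rw [← h3]; simp
    simp only [LinearMap.funLeft_apply]
    simp [hiff]
  · rintro ⟨y, ⟨S, h1, h2, rfl⟩, rfl⟩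
    refine ⟨Finset.univ.filter (fun v : V => Sum.inl v ∈ S), part1 S h1 (fun L hL => ?_), ?_⟩
    · convert h2 L hL using 3
    funext w
    simp only [LinearMap.funLeft_apply]
    simp
end
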